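/- Let A be a unital C*-algebra, let Z be a normed space, let φ : A × A → Z be a continuous bilinear map, and let ε ≥ 0 be a constant such that ‖φ(a,b)‖ ≤ ε‖a‖‖b‖ whenever a, b are positive elements of A with ab = 0. Then ‖φ(a,1) − φ(1,a)‖ ≤ 8ε‖a‖ for every a ∈ A. -/

import Mathlib

open Finset ComplexStarModule

namespace Stmt0Aux



noncomputable def clamp01 (s : ℝ) : ℝ := max 0 (min 1 s)

lemma clamp01_nonneg (s : ℝ) : 0 ≤ clamp01 s := le_max_left _ _

lemma clamp01_le_one (s : ℝ) : clamp01 s ≤ 1 :=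
  max_le zero_le_one (min_le_left _ _)

lemma clamp01_mono : Monotone clamp01 :=
  fun _ _ hab => max_le_max le_rfl (min_le_min le_rfl hab)

lemma clamp01_of_nonpos {s : ℝ} (hs : s ≤ 0) : clamp01 s = 0 := by
  unfold clamp01
  rw [min_eq_right (hs.trans zero_le_one), max_eq_left hs]

lemma clamp01_of_one_le {s : ℝ} (hs : 1 ≤ s) : clamp01 s = 1 := by
  unfold clamp01
  rw [min_eq_left hs, max_eq_right zero_le_one]

lemma clamp01_of_mem {s : ℝ} (h0 : 0 ≤ s) (h1 : s ≤ 1) : clamp01 s = s := by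
  unfold clamp01
  rw [min_eq_right h1, max_eq_right h0]

lemma continuous_clamp01 : Continuous clamp01 :=
  continuous_const.max (continuous_const.min continuous_id)

lemma sum_clamp01 (n : ℕ) (s : ℝ) (h0 : 0 ≤ s) (hn : s ≤ n) :
    ∑ k ∈ range n, clamp01 (s - k) = s := by
  induction n with
  | zero =>
    simp only [range_zero, sum_empty]
    exact le_antisymm (by exact_mod_cast hn) h0 |>.symm ▸ rfl
  | succ n ih =>
    rw [sum_range_succ]
    rcases le_or_gt s n with hsn | hsn
    · rw [ih hsn, clamp01_of_nonpos (by simpa using hsn), add_zero]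
    · have hall : ∀ k ∈ range n, clamp01 (s - k) = 1 := by
        intro k hk
        have hk' : (k : ℝ) ≤ (n : ℝ) - 1 := by
          have := mem_range.mp hk
          have : (k : ℝ) + 1 ≤ (n : ℝ) := by exact_mod_cast this
          linarith
        exact clamp01_of_one_le (by linarith)
      rw [sum_congr rfl hall, sum_const, card_range, nsmul_eq_mul, mul_one,
        clamp01_of_mem (by linarith) (by push_cast at hn ⊢; linarith)]
      ring


/-- The slab "tail" functions: `Ff n 0 = 1`, and `Ff n (k+1)` ramps from 0 to 1
on the interval `[-1 + k*(2/n), -1 + (k+1)*(2/n)]`. -/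
noncomputable def Ff (n : ℕ) : ℕ → ℝ → ℝ
  | 0 => fun _ => 1
  | (k+1) => fun t => clamp01 ((t + 1) * n / 2 - k)

lemma Ff_continuous (n k : ℕ) : Continuous (Ff n k) := by
  cases k with
  | zero => exact continuous_const
  | succ k =>
    exact continuous_clamp01.comp <| by fun_prop

lemma Ff_nonneg (n k : ℕ) (t : ℝ) : 0 ≤ Ff n k t := by
  cases k with
  | zero => exact zero_le_one
  | succ k => exact clamp01_nonneg _

lemma Ff_le_one (n k : ℕ) (t : ℝ) : Ff n k t ≤ 1 := by
  cases k with
  | zero => exact le_rfl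
  | succ k => exact clamp01_le_one _

lemma Ff_antitone (n k : ℕ) (t : ℝ) : Ff n (k+1) t ≤ Ff n k t := by
  cases k with
  | zero => exact Ff_le_one n 1 t
  | succ k =>
    exact clamp01_mono (by push_cast; linarith)

/-- Orthogonality of a tail and the complement of the previous tail. -/
lemma Ff_orth (n k : ℕ) (t : ℝ) : Ff n (k+1) t * (1 - Ff n k t) = 0 := by
  cases k with
  | zero => simp [Ff]
  | succ k =>
    rcases le_or_gt 1 ((t + 1) * n / 2 - k) with hs | hs
    · have : Ff n (k+1) t = 1 := clamp01_of_one_le hs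
      simp [this]
    · have : Ff n (k+1+1) t = 0 := clamp01_of_nonpos (by push_cast; linarith)
      simp [Ff] at this ⊢
      simp [this]

/-- Vanishing of high tails on `(-∞, 1]`. -/
lemma Ff_eq_zero (n k : ℕ) (hk : n + 1 ≤ k) (t : ℝ) (ht : t ≤ 1) : Ff n k t = 0 := by
  obtain ⟨j, rfl⟩ : ∃ j, k = j + 1 := ⟨k - 1, by omega⟩
  refine clamp01_of_nonpos ?_
  have hj : (n : ℝ) ≤ (j : ℝ) := by exact_mod_cast Nat.le_of_succ_le_succ hk
  have : (t + 1) * n / 2 ≤ n := by nlinarith [Nat.cast_nonneg (α := ℝ) n]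
  linarith

/-- The partition identity: `∑_{k<n} Ff n (k+1) t = (t+1) * n / 2` on `[-1,1]`. -/
lemma Ff_partition (n : ℕ) (t : ℝ) (h1 : -1 ≤ t) (h2 : t ≤ 1) :
    ∑ k ∈ range n, Ff n (k+1) t = (t + 1) * n / 2 := by
  have h0 : 0 ≤ (t + 1) * n / 2 := by nlinarith [Nat.cast_nonneg (α := ℝ) n]
  have hn : (t + 1) * n / 2 ≤ n := by nlinarith [Nat.cast_nonneg (α := ℝ) n]
  simpa [Ff] using sum_clamp01 n ((t + 1) * n / 2) h0 hn

/-- The slab differences. -/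
noncomputable def Df (n : ℕ) (j : ℕ) (t : ℝ) : ℝ := Ff n j t - Ff n (j+1) t

lemma Df_nonneg (n j : ℕ) (t : ℝ) : 0 ≤ Df n j t :=
  sub_nonneg.mpr (Ff_antitone n j t)

lemma Df_sum (n m : ℕ) (t : ℝ) : ∑ j ∈ range m, Df n j t = 1 - Ff n m t := by
  have := Finset.sum_range_sub' (fun j => Ff n j t) m
  simpa [Df, Ff] using this

lemma Df_continuous (n j : ℕ) : Continuous (Df n j) :=
  (Ff_continuous n j).sub (Ff_continuous n (j+1))

/-- Modulated sums of slab differences are pointwise bounded by 1. -/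
lemma Df_modulated (n m : ℕ) (z : ℕ → ℝ) (hz : ∀ j, |z j| ≤ 1) (t : ℝ) :
    |∑ j ∈ range m, z j * Df n j t| ≤ 1 := by
  calc |∑ j ∈ range m, z j * Df n j t| ≤ ∑ j ∈ range m, |z j * Df n j t| :=
        Finset.abs_sum_le_sum_abs _ _
    _ ≤ ∑ j ∈ range m, Df n j t := by
        refine Finset.sum_le_sum fun j _ => ?_
        rw [abs_mul, abs_of_nonneg (Df_nonneg n j t)]
        exact mul_le_of_le_one_left (Df_nonneg n j t) (hz j)
    _ = 1 - Ff n m t := Df_sum n m t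
    _ ≤ 1 := by linarith [Ff_nonneg n m t]


set_option linter.unusedSectionVars false
section CFCLayer

variable {A : Type*} [CStarAlgebra A] [PartialOrder A] [StarOrderedRing A] [Nontrivial A]

/-- tails as elements -/
noncomputable def ee (n : ℕ) (x : A) (k : ℕ) : A := cfc (Ff n k) x
/-- complements of tails -/
noncomputable def gg (n : ℕ) (x : A) (k : ℕ) : A := cfc (fun t => 1 - Ff n k t) x
/-- slab differences as elements -/
noncomputable def dd (n : ℕ) (x : A) (j : ℕ) : A := ee n x j - ee n x (j+1)

variable {x : A} (hx : IsSelfAdjoint x) (hx1 : ‖x‖ ≤ 1) (n : ℕ)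

include hx1 in
lemma hspec (t : ℝ) (ht : t ∈ spectrum ℝ x) : -1 ≤ t ∧ t ≤ 1 := by
  have h : |t| ≤ 1 := by
    simpa using (spectrum.norm_le_norm_of_mem ht).trans hx1
  exact abs_le.mp h

lemma ee_nonneg (k : ℕ) : 0 ≤ ee n x k :=
  cfc_nonneg fun t _ => Ff_nonneg n k t

lemma gg_nonneg (k : ℕ) : 0 ≤ gg n x k :=
  cfc_nonneg fun t _ => by linarith [Ff_le_one n k t]

lemma norm_ee_le (k : ℕ) : ‖ee n x k‖ ≤ 1 := by
  refine norm_cfc_le zero_le_one fun t _ => ?_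
  rw [Real.norm_eq_abs, abs_of_nonneg (Ff_nonneg n k t)]
  exact Ff_le_one n k t

lemma norm_gg_le (k : ℕ) : ‖gg n x k‖ ≤ 1 := by
  refine norm_cfc_le zero_le_one fun t _ => ?_
  rw [Real.norm_eq_abs, abs_of_nonneg (by linarith [Ff_le_one n k t])]
  linarith [Ff_nonneg n k t]

include hx in
lemma ee_zero_eq : ee n x 0 = 1 := by
  have : Ff n 0 = fun _ : ℝ => (1:ℝ) := rfl
  rw [ee, this, cfc_const_one ℝ x hx]

lemma ee_mul_gg (k : ℕ) : ee n x (k+1) * gg n x k = 0 := by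
  rw [ee, gg, ← cfc_mul (Ff n (k+1)) _ x (Ff_continuous n (k+1)).continuousOn
    (by exact (continuous_const.sub (Ff_continuous n k)).continuousOn)]
  have : (fun t => Ff n (k+1) t * (1 - Ff n k t)) = fun _ : ℝ => (0:ℝ) :=
    funext (Ff_orth n k)
  rw [this, cfc_const_zero ℝ x]

lemma gg_mul_ee (k : ℕ) : gg n x k * ee n x (k+1) = 0 := by
  rw [gg, ee, ← cfc_mul _ _ x (by exact (continuous_const.sub (Ff_continuous n k)).continuousOn)
    (Ff_continuous n (k+1)).continuousOn]
  have : (fun t => (1 - Ff n k t) * Ff n (k+1) t) = fun _ : ℝ => (0:ℝ) :=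
    funext fun t => by rw [mul_comm]; exact Ff_orth n k t
  rw [this, cfc_const_zero ℝ x]

include hx in
lemma gg_eq (k : ℕ) : gg n x k = 1 - ee n x k := by
  rw [gg, ee, cfc_sub (fun _ => (1:ℝ)) (Ff n k) x (by exact continuousOn_const)
    (Ff_continuous n k).continuousOn, cfc_const_one ℝ x hx]

include hx hx1 in
lemma ee_top_eq_zero : ee n x (n+1) = 0 := by
  rw [ee, ← cfc_const_zero ℝ x]
  exact cfc_congr fun t ht => Ff_eq_zero n (n+1) le_rfl t (hspec hx1 t ht).2

include hx in
lemma dd_eq_cfc (j : ℕ) : dd n x j = cfc (Df n j) x := by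
  rw [dd, ee, ee,
    show Df n j = fun t => Ff n j t - Ff n (j+1) t from rfl,
    cfc_sub (Ff n j) (Ff n (j+1)) x (Ff_continuous n j).continuousOn
    (Ff_continuous n (j+1)).continuousOn]

include hx in
lemma dd_nonneg (j : ℕ) : 0 ≤ dd n x j := by
  rw [dd_eq_cfc hx]
  exact cfc_nonneg fun t _ => Df_nonneg n j t

include hx in
lemma dd_modulated (z : ℕ → ℝ) (hz : ∀ j, |z j| ≤ 1) (m : ℕ) :
    ‖∑ j ∈ range m, z j • dd n x j‖ ≤ 1 := by
  have h1 : ∀ j, z j • dd n x j = cfc (fun t => z j * Df n j t) x := fun j => by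
    rw [dd_eq_cfc hx, ← cfc_const_mul (z j) (Df n j) x (Df_continuous n j).continuousOn]
  have h2 : ∑ j ∈ range m, z j • dd n x j
      = cfc (fun t => ∑ j ∈ range m, z j * Df n j t) x := by
    rw [Finset.sum_congr rfl fun j _ => h1 j]
    rw [show (fun t => ∑ j ∈ range m, z j * Df n j t)
        = (∑ j ∈ range m, fun t => z j * Df n j t) from by ext t; simp]
    rw [cfc_sum _ x _ fun j _ => by
      exact (continuous_const.mul (Df_continuous n j)).continuousOn]
  rw [h2]
  refine norm_cfc_le zero_le_one fun t _ => ?_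
  rw [Real.norm_eq_abs]
  exact Df_modulated n m z hz t

include hx hx1 in
lemma ee_eq_sum_dd (k : ℕ) (hk : k ≤ n) :
    ee n x (k+1) = ∑ j ∈ Finset.Ico (k+1) (n+1), dd n x j := by
  have tele : ∀ m : ℕ, ∑ j ∈ range m, dd n x j = ee n x 0 - ee n x m := fun m =>
    Finset.sum_range_sub' (fun j => ee n x j) m
  rw [Finset.sum_Ico_eq_sub _ (by omega), tele, tele, ee_top_eq_zero hx hx1]
  abel

include hx hx1 in
lemma x_eq_sum (hn : 1 ≤ n) :
    x = algebraMap ℝ A (-1) + (2/(n:ℝ)) • ∑ k ∈ range n, ee n x (k+1) := by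
  have hsum : ∑ k ∈ range n, ee n x (k+1)
      = cfc (fun t => ∑ k ∈ range n, Ff n (k+1) t) x := by
    rw [show (fun t => ∑ k ∈ range n, Ff n (k+1) t)
        = (∑ k ∈ range n, fun t => Ff n (k+1) t) from by ext t; simp]
    rw [cfc_sum _ x _ fun k _ => (Ff_continuous n (k+1)).continuousOn]
    rfl
  have hS : Continuous fun t : ℝ => ∑ k ∈ range n, Ff n (k+1) t :=
    continuous_finset_sum _ fun k _ => Ff_continuous n (k+1)
  rw [hsum, ← cfc_const_mul (2/(n:ℝ)) _ x hS.continuousOn,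
    ← cfc_const_add (-1 : ℝ) (fun t => 2/(n:ℝ) * ∑ k ∈ range n, Ff n (k+1) t) x (continuous_const.mul hS).continuousOn hx]
  conv_lhs => rw [← cfc_id ℝ x hx]
  refine cfc_congr fun t ht => ?_
  obtain ⟨h1, h2⟩ := hspec hx1 t ht
  rw [Ff_partition n t h1 h2]
  have hn' : (n:ℝ) ≠ 0 := by positivity
  simp only [id]
  field_simp
  ring

end CFCLayer


section Triangle

variable {A : Type*} [NormedAddCommGroup A] [NormedSpace ℂ A]
variable {Z : Type*} [NormedAddCommGroup Z] [NormedSpace ℂ Z]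
variable (φ : A →L[ℂ] A →L[ℂ] Z)

/-- signs attached to a finite set -/
noncomputable def sgn (S : Finset ℕ) (b : ℕ) : ℝ := if b ∈ S then 1 else -1

lemma abs_sgn_le (S : Finset ℕ) (b : ℕ) : |sgn S b| ≤ 1 := by
  unfold sgn; split <;> simp

lemma sgn_key (M : ℕ) {b b' : ℕ} (hb : b ∈ range M) :
    ∑ S ∈ (range M).powerset, sgn S b * sgn S b'
      = if b = b' then (2^M : ℝ) else 0 := by
  rcases eq_or_ne b b' with rfl | hne
  · simp only [if_pos rfl]
    have : ∀ S ∈ (range M).powerset, sgn S b * sgn S b = 1 := by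
      intro S _
      unfold sgn; split <;> norm_num
    rw [Finset.sum_congr rfl this, Finset.sum_const, Finset.card_powerset,
      Finset.card_range, nsmul_eq_mul, mul_one]
    norm_num
  · rw [if_neg hne]
    classical
    refine Finset.sum_involution
      (fun S _ => if b ∈ S then S.erase b else insert b S) ?_ ?_ ?_ ?_
    · intro S hS
      by_cases hbS : b ∈ S
      · simp only [if_pos hbS]
        have h1 : sgn (S.erase b) b = -1 := by
          unfold sgn; rw [if_neg (Finset.notMem_erase b S)]
        have h2 : sgn (S.erase b) b' = sgn S b' := by
          simp [sgn, Finset.mem_erase, Ne.symm hne]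
        rw [h1, h2]
        unfold sgn; rw [if_pos hbS]; ring
      · simp only [if_neg hbS]
        have h1 : sgn (insert b S) b = 1 := by
          unfold sgn; rw [if_pos (Finset.mem_insert_self b S)]
        have h2 : sgn (insert b S) b' = sgn S b' := by
          simp [sgn, Finset.mem_insert, Ne.symm hne]
        rw [h1, h2]
        unfold sgn; rw [if_neg hbS]; ring
    · intro S hS _
      by_cases hbS : b ∈ S
      · simp only [if_pos hbS]
        intro hcon
        exact (Finset.notMem_erase b S) (by rw [hcon]; exact hbS)
      · simp only [if_neg hbS]
        intro hcon
        exact hbS (hcon ▸ Finset.mem_insert_self b S)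
    · intro S hS
      rw [Finset.mem_powerset] at hS ⊢
      by_cases hbS : b ∈ S
      · simp only [if_pos hbS]
        exact (Finset.erase_subset b S).trans hS
      · simp only [if_neg hbS]
        exact Finset.insert_subset hb hS
    · intro S hS
      by_cases hbS : b ∈ S
      · simp only [if_pos hbS, if_neg (Finset.notMem_erase b S)]
        exact Finset.insert_erase hbS
      · simp only [if_neg hbS, if_pos (Finset.mem_insert_self b S)]
        exact Finset.erase_insert hbS

lemma smul_smul_apply (r s : ℝ) (u v : A) :
    φ (r • u) (s • v) = (r * s) • φ u v := by
  have h1 : φ (r • u) = r • φ u := φ.map_smul_of_tower r u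
  rw [h1, ContinuousLinearMap.smul_apply, (φ u).map_smul_of_tower, smul_smul]

/-- Rademacher averaging bound for "diagonal" sums of a bilinear map. -/
lemma rad {C : ℝ} (hC : 0 ≤ C) (hφ : ∀ u v, ‖φ u v‖ ≤ C * ‖u‖ * ‖v‖)
    (M : ℕ) (U V : ℕ → A)
    (hU : ∀ z : ℕ → ℝ, (∀ b, |z b| ≤ 1) → ‖∑ b ∈ range M, z b • U b‖ ≤ 1)
    (hV : ∀ z : ℕ → ℝ, (∀ b, |z b| ≤ 1) → ‖∑ b ∈ range M, z b • V b‖ ≤ 1) :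
    ‖∑ b ∈ range M, φ (U b) (V b)‖ ≤ C := by
  have expand : ∀ S : Finset ℕ,
      φ (∑ b ∈ range M, sgn S b • U b) (∑ b' ∈ range M, sgn S b' • V b')
      = ∑ b ∈ range M, ∑ b' ∈ range M, (sgn S b * sgn S b') • φ (U b) (V b') := by
    intro S
    rw [map_sum φ, ContinuousLinearMap.sum_apply]
    refine Finset.sum_congr rfl fun b _ => ?_
    rw [map_sum]
    exact Finset.sum_congr rfl fun b' _ => smul_smul_apply φ _ _ _ _
  have key : ∑ S ∈ (range M).powerset,
      φ (∑ b ∈ range M, sgn S b • U b) (∑ b' ∈ range M, sgn S b' • V b')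
      = (2^M : ℝ) • ∑ b ∈ range M, φ (U b) (V b) := by
    rw [Finset.sum_congr rfl fun S _ => expand S]
    rw [Finset.sum_comm]
    rw [Finset.smul_sum]
    refine Finset.sum_congr rfl fun b hb => ?_
    rw [Finset.sum_comm]
    have h1 : ∀ b' ∈ range M,
        ∑ S ∈ (range M).powerset, (sgn S b * sgn S b') • φ (U b) (V b')
        = (if b = b' then (2^M:ℝ) else 0) • φ (U b) (V b') := by
      intro b' _
      rw [← Finset.sum_smul, sgn_key M hb]
    rw [Finset.sum_congr rfl h1]
    have h2 : ∀ b' ∈ range M,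
        (if b = b' then (2^M:ℝ) else 0) • φ (U b) (V b')
        = (if b = b' then (2^M:ℝ) • φ (U b) (V b') else 0) := by
      intro b' _
      split <;> simp
    rw [Finset.sum_congr rfl h2, Finset.sum_ite_eq (range M) b
      (fun b' => (2^M:ℝ) • φ (U b) (V b')), if_pos hb]
  have hbound : ∀ S ∈ (range M).powerset,
      ‖φ (∑ b ∈ range M, sgn S b • U b) (∑ b' ∈ range M, sgn S b' • V b')‖ ≤ C := by
    intro S _
    have hu := hU (sgn S) (abs_sgn_le S)
    have hv := hV (sgn S) (abs_sgn_le S)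
    have hnu : (0:ℝ) ≤ ‖∑ b ∈ range M, sgn S b • U b‖ := norm_nonneg _
    have hnv : (0:ℝ) ≤ ‖∑ b' ∈ range M, sgn S b' • V b'‖ := norm_nonneg _
    calc ‖φ (∑ b ∈ range M, sgn S b • U b) (∑ b' ∈ range M, sgn S b' • V b')‖
        ≤ C * ‖∑ b ∈ range M, sgn S b • U b‖ * ‖∑ b' ∈ range M, sgn S b' • V b'‖ := hφ _ _
      _ ≤ C := by
          have h1 := mul_le_of_le_one_right (mul_nonneg hC hnu) hv
          have h2 := mul_le_of_le_one_right hC hu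
          linarith
  have hfin : ‖(2^M:ℝ) • ∑ b ∈ range M, φ (U b) (V b)‖ ≤ 2^M * C := by
    rw [← key]
    refine (norm_sum_le _ _).trans ?_
    calc ∑ S ∈ (range M).powerset,
          ‖φ (∑ b ∈ range M, sgn S b • U b) (∑ b' ∈ range M, sgn S b' • V b')‖
        ≤ ∑ _S ∈ (range M).powerset, C := Finset.sum_le_sum hbound
      _ = 2^M * C := by
          rw [Finset.sum_const, Finset.card_powerset, Finset.card_range, nsmul_eq_mul]
          norm_num
  rw [norm_smul, Real.norm_eq_abs, abs_of_pos (by positivity : (0:ℝ) < 2^M)] at hfin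
  have hpos : (0:ℝ) < 2^M := by positivity
  exact le_of_mul_le_mul_left hfin hpos

lemma sum_range_split {M : Type*} [AddCommMonoid M] (f : ℕ → M) (m k : ℕ) :
    ∑ i ∈ range (m + k), f i = ∑ i ∈ range m, f i + ∑ i ∈ range k, f (m + i) := by
  induction k with
  | zero => simp
  | succ k ih =>
    rw [← Nat.add_assoc, sum_range_succ, ih, sum_range_succ, add_assoc]

lemma sum_range_blocks {M : Type*} [AddCommMonoid M] (f : ℕ → M) (m K : ℕ) :
    ∑ j ∈ range (m * K), f j = ∑ b ∈ range m, ∑ r ∈ range K, f (b * K + r) := by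
  induction m with
  | zero => simp
  | succ m ih =>
    rw [Nat.succ_mul, sum_range_split, ih, sum_range_succ]

/-- The triangle sum of a bilinear map over a block of indices. -/
noncomputable def TriS (d : ℕ → A) (o N : ℕ) : Z :=
  ∑ j ∈ range N, ∑ k ∈ range j, φ (d (o + j)) (d (o + k))

lemma TriS_split (d : ℕ → A) (o N : ℕ) :
    TriS φ d o (N + N) = TriS φ d o N + TriS φ d (o + N) N
      + φ (∑ p ∈ range N, d (o + N + p)) (∑ q ∈ range N, d (o + q)) := by
  unfold TriS
  rw [sum_range_split (fun j => ∑ k ∈ range j, φ (d (o + j)) (d (o + k))) N N]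
  have hinner : ∀ j ∈ range N,
      ∑ k ∈ range (N + j), φ (d (o + (N + j))) (d (o + k))
      = (∑ k ∈ range N, φ (d (o + N + j)) (d (o + k)))
        + ∑ k ∈ range j, φ (d (o + N + j)) (d (o + N + k)) := by
    intro j _
    rw [sum_range_split (fun k => φ (d (o + (N + j))) (d (o + k))) N j]
    simp only [← Nat.add_assoc]
  rw [Finset.sum_congr rfl hinner, Finset.sum_add_distrib]
  have hcross : ∑ j ∈ range N, ∑ k ∈ range N, φ (d (o + N + j)) (d (o + k))
      = φ (∑ p ∈ range N, d (o + N + p)) (∑ q ∈ range N, d (o + q)) := by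
    rw [map_sum φ, ContinuousLinearMap.sum_apply]
    exact Finset.sum_congr rfl fun j _ => (map_sum (φ (d (o + N + j))) _ _).symm
  rw [hcross]
  abel

/-- The key dyadic estimate: triangle sums over `M` blocks of size `2^L` cost `L * C`. -/
lemma tri_bound (d : ℕ → A) {C : ℝ} (hC : 0 ≤ C)
    (hφ : ∀ u v, ‖φ u v‖ ≤ C * ‖u‖ * ‖v‖)
    (hd : ∀ z : ℕ → ℝ, (∀ j, |z j| ≤ 1) → ∀ m, ‖∑ j ∈ range m, z j • d j‖ ≤ 1) :
    ∀ L M : ℕ, ‖∑ b ∈ range M, TriS φ d (b * 2^L) (2^L)‖ ≤ L * C := by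
  intro L
  induction L with
  | zero =>
    intro M
    simp [TriS]
  | succ L ih =>
    intro M
    have h2 : (2:ℕ)^(L+1) = 2^L + 2^L := by rw [pow_succ]; ring
    set K : ℕ := 2^(L+1) with hK
    have hK0 : 0 < K := Nat.pow_pos (by norm_num)
    have h2L : (2:ℕ)^L < K := by rw [hK, pow_succ]; have := (Nat.pow_pos (show 0 < 2 by norm_num) : 0 < 2^L); omega
    have hmod : ∀ b r : ℕ, r < K → (b * K + r) % K = r := fun b r h => by
      rw [Nat.add_comm, Nat.add_mul_mod_self_right, Nat.mod_eq_of_lt h]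
    have hdiv : ∀ b r : ℕ, r < K → (b * K + r) / K = b := fun b r h => by
      rw [Nat.add_comm, Nat.add_mul_div_right _ _ hK0, Nat.div_eq_of_lt h, Nat.zero_add]
    have hsplit : ∀ b ∈ range M, TriS φ d (b * K) K
        = (TriS φ d ((2*b) * 2^L) (2^L) + TriS φ d ((2*b+1) * 2^L) (2^L))
          + φ (∑ p ∈ range (2^L), d (b * K + 2^L + p))
              (∑ q ∈ range (2^L), d (b * K + q)) := by
      intro b _
      have e1 : b * K = (2*b) * 2^L := by rw [hK, pow_succ]; ring
      have e2 : b * K + 2^L = (2*b+1) * 2^L := by rw [hK, pow_succ]; ring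
      calc TriS φ d (b * K) K = TriS φ d (b * K) (2^L + 2^L) := by rw [← h2]
        _ = TriS φ d (b * K) (2^L) + TriS φ d (b * K + 2^L) (2^L)
            + φ (∑ p ∈ range (2^L), d (b * K + 2^L + p))
                (∑ q ∈ range (2^L), d (b * K + q)) := TriS_split φ d _ _
        _ = _ := by
            congr 1
            congr 1
            · rw [e1]
            · rw [e2]
    rw [Finset.sum_congr rfl hsplit, Finset.sum_add_distrib]
    have hpair : ∀ m : ℕ, ∑ b ∈ range m,
          (TriS φ d ((2*b) * 2^L) (2^L) + TriS φ d ((2*b+1) * 2^L) (2^L))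
        = ∑ b' ∈ range (2*m), TriS φ d (b' * 2^L) (2^L) := by
      intro m
      induction m with
      | zero => simp
      | succ m ihm =>
        rw [Finset.sum_range_succ, ihm, Nat.mul_succ,
          sum_range_split (fun b' => TriS φ d (b' * 2^L) (2^L)) (2*m) 2,
          Finset.sum_range_succ, Finset.sum_range_one]
        simp only [Nat.add_zero]
    have hcrossbd : ‖∑ b ∈ range M, φ (∑ p ∈ range (2^L), d (b * K + 2^L + p))
        (∑ q ∈ range (2^L), d (b * K + q))‖ ≤ C := by
      refine rad φ hC hφ M _ _ ?_ ?_
      · intro z hz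
        have hw : ∀ j : ℕ, |(if 2^L ≤ j % K then z (j / K) else 0 : ℝ)| ≤ 1 := by
          intro j; split
          · exact hz _
          · simp
        have heq : ∑ b ∈ range M, z b • ∑ p ∈ range (2^L), d (b * K + 2^L + p)
            = ∑ j ∈ range (M * K), (if 2^L ≤ j % K then z (j / K) else 0) • d j := by
          rw [sum_range_blocks (fun j => (if 2^L ≤ j % K then z (j / K) else 0) • d j) M K]
          refine Finset.sum_congr rfl fun b _ => ?_
          have hsum := sum_range_split
            (fun r => (if 2^L ≤ (b * K + r) % K then z ((b * K + r) / K) else 0) • d (b * K + r))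
            (2^L) (2^L)
          rw [← h2] at hsum
          rw [hsum]
          have hz0 : ∀ r ∈ range (2^L),
              (if 2^L ≤ (b * K + r) % K then z ((b * K + r) / K) else 0) • d (b * K + r) = 0 := by
            intro r hr
            rw [hmod b r ((mem_range.mp hr).trans h2L),
              if_neg (Nat.not_le.mpr (mem_range.mp hr)), zero_smul]
          rw [Finset.sum_eq_zero hz0, zero_add, Finset.smul_sum]
          refine Finset.sum_congr rfl fun i hi => ?_
          have hlt : 2^L + i < K := by have := mem_range.mp hi; omega
          rw [hmod b _ hlt, if_pos (Nat.le_add_right _ _), hdiv b _ hlt, ← Nat.add_assoc]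
        rw [heq]
        exact hd _ hw (M * K)
      · intro z hz
        have hw : ∀ j : ℕ, |(if j % K < 2^L then z (j / K) else 0 : ℝ)| ≤ 1 := by
          intro j; split
          · exact hz _
          · simp
        have heq : ∑ b ∈ range M, z b • ∑ q ∈ range (2^L), d (b * K + q)
            = ∑ j ∈ range (M * K), (if j % K < 2^L then z (j / K) else 0) • d j := by
          rw [sum_range_blocks (fun j => (if j % K < 2^L then z (j / K) else 0) • d j) M K]
          refine Finset.sum_congr rfl fun b _ => ?_
          have hsum := sum_range_split
            (fun r => (if (b * K + r) % K < 2^L then z ((b * K + r) / K) else 0) • d (b * K + r))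
            (2^L) (2^L)
          rw [← h2] at hsum
          rw [hsum]
          have hz0 : ∀ i ∈ range (2^L),
              (if (b * K + (2^L + i)) % K < 2^L then z ((b * K + (2^L + i)) / K) else 0)
                • d (b * K + (2^L + i)) = 0 := by
            intro i hi
            have hlt : 2^L + i < K := by have := mem_range.mp hi; omega
            rw [hmod b _ hlt, if_neg (by omega), zero_smul]
          rw [Finset.sum_eq_zero hz0, add_zero, Finset.smul_sum]
          refine Finset.sum_congr rfl fun q hq => ?_
          have hlt : q < K := (mem_range.mp hq).trans h2L
          rw [hmod b _ hlt, if_pos (mem_range.mp hq), hdiv b _ hlt]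
        rw [heq]
        exact hd _ hw (M * K)
    rw [hpair M]
    refine (norm_add_le _ _).trans ?_
    have h3 : ((L:ℝ)+1) * C = (L:ℝ) * C + C := by ring
    calc ‖∑ b' ∈ range (2*M), TriS φ d (b' * 2^L) (2^L)‖
          + ‖∑ b ∈ range M, φ (∑ p ∈ range (2^L), d (b * K + 2^L + p))
              (∑ q ∈ range (2^L), d (b * K + q))‖
        ≤ (L:ℝ) * C + C := add_le_add (ih (2*M)) hcrossbd
      _ = ((L+1 : ℕ):ℝ) * C := by push_cast; ring

end Triangle


section Main

variable {A : Type*} [CStarAlgebra A] [PartialOrder A] [StarOrderedRing A]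
variable {Z : Type*} [NormedAddCommGroup Z] [NormedSpace ℂ Z]

lemma two_pow_bound : ∀ L : ℕ, 5 ≤ L → 2*L + 2 ≤ 2^L ∧ L*L ≤ 2^L - 1 := by
  intro L hL
  induction L with
  | zero => omega
  | succ L ih =>
    rcases Nat.lt_or_ge L 5 with hz | hz
    · have : L = 4 := by omega
      subst this
      norm_num
    · obtain ⟨h1, h2⟩ := ih hz
      have hp : 2^(L+1) = 2*2^L := by rw [pow_succ]; ring
      have hg : (L+1)*(L+1) = L*L + 2*L + 1 := by ring
      constructor <;> omega

lemma selfadj_bound [Nontrivial A] (φ : A →L[ℂ] A →L[ℂ] Z) (ε : ℝ) (hε : 0 ≤ ε)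
    (h : ∀ a b : A, 0 ≤ a → 0 ≤ b → a * b = 0 → ‖φ a b‖ ≤ ε * ‖a‖ * ‖b‖)
    {x : A} (hx : IsSelfAdjoint x) (hx1 : ‖x‖ ≤ 1) :
    ‖φ x 1 - φ 1 x‖ ≤ 4 * ε := by
  set ψ : A →L[ℂ] Z := φ.flip 1 - φ 1 with hψdef
  have hψ : ∀ u : A, ψ u = φ u 1 - φ 1 u := fun u => by
    simp [hψdef, ContinuousLinearMap.sub_apply, ContinuousLinearMap.flip_apply]
  have hψ1 : ψ (1:A) = 0 := by rw [hψ]; exact sub_self _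
  have hφC : ∀ u v : A, ‖φ u v‖ ≤ ‖φ‖ * ‖u‖ * ‖v‖ := fun u v => φ.le_opNorm₂ u v
  have hφC' : ∀ u v : A, ‖φ.flip u v‖ ≤ ‖φ‖ * ‖u‖ * ‖v‖ := fun u v => by
    rw [ContinuousLinearMap.flip_apply]
    calc ‖φ v u‖ ≤ ‖φ‖ * ‖v‖ * ‖u‖ := φ.le_opNorm₂ v u
      _ = ‖φ‖ * ‖u‖ * ‖v‖ := by ring
  have main : ∀ L : ℕ, 1 ≤ L →
      ‖ψ x‖ ≤ 4*ε + (2 / ((2^L - 1 : ℕ) : ℝ)) * (2 * L * ‖φ‖) := by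
    intro L hL
    set n : ℕ := 2^L - 1 with hn
    have h2L : 2 ≤ 2^L := by
      calc 2 = 2^1 := (pow_one 2).symm
        _ ≤ 2^L := Nat.pow_le_pow_right (by norm_num) hL
    have hn1 : 1 ≤ n := by omega
    have hnt : n + 1 = 2^L := by omega
    have hnR : (1:ℝ) ≤ (n:ℝ) := by exact_mod_cast hn1
    have hnR0 : (0:ℝ) < (n:ℝ) := by linarith
    have hxeq := x_eq_sum hx hx1 n hn1
    have step1 : ψ x = (2/(n:ℝ)) • ∑ k ∈ range n, ψ (ee n x (k+1)) := by
      conv_lhs => rw [hxeq]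
      rw [map_add, ψ.map_smul_of_tower, map_sum]
      have hz : ψ (algebraMap ℝ A (-1)) = 0 := by
        rw [Algebra.algebraMap_eq_smul_one, ψ.map_smul_of_tower, hψ1, smul_zero]
      rw [hz, zero_add]
    have step2 : ∀ k, ψ (ee n x (k+1))
        = (φ (ee n x (k+1)) (gg n x k) - φ (gg n x k) (ee n x (k+1)))
          + (φ (ee n x (k+1)) (dd n x k) - φ (dd n x k) (ee n x (k+1))) := by
      intro k
      have hone : (1:A) = gg n x k + (dd n x k + ee n x (k+1)) := by
        rw [gg_eq hx n k]
        unfold dd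
        abel
      rw [hψ]
      conv_lhs => rw [hone]
      simp only [map_add, ContinuousLinearMap.add_apply]
      abel
    have hT1 : ∑ k ∈ range n, φ (ee n x (k+1)) (dd n x k)
        = TriS φ (dd n x) 0 (n+1) := by
      have hsub : ∀ k ∈ range n, φ (ee n x (k+1)) (dd n x k)
          = ∑ j ∈ Finset.Ico (k+1) (n+1), φ (dd n x j) (dd n x k) := by
        intro k hk
        rw [ee_eq_sum_dd hx hx1 n k (mem_range.mp hk).le]
        rw [map_sum, ContinuousLinearMap.sum_apply]
      rw [Finset.sum_congr rfl hsub]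
      rw [Finset.sum_comm' (s := range n) (t := fun k => Finset.Ico (k+1) (n+1))
        (t' := range (n+1)) (s' := fun j => range j)
        (by intro k j; simp only [mem_range, mem_Ico]; omega)]
      simp [TriS]
    have hT2 : ∑ k ∈ range n, φ (dd n x k) (ee n x (k+1))
        = TriS φ.flip (dd n x) 0 (n+1) := by
      have hsub : ∀ k ∈ range n, φ (dd n x k) (ee n x (k+1))
          = ∑ j ∈ Finset.Ico (k+1) (n+1), φ.flip (dd n x j) (dd n x k) := by
        intro k hk
        rw [ee_eq_sum_dd hx hx1 n k (mem_range.mp hk).le]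
        rw [map_sum]
        exact Finset.sum_congr rfl fun j _ => rfl
      rw [Finset.sum_congr rfl hsub]
      rw [Finset.sum_comm' (s := range n) (t := fun k => Finset.Ico (k+1) (n+1))
        (t' := range (n+1)) (s' := fun j => range j)
        (by intro k j; simp only [mem_range, mem_Ico]; omega)]
      simp [TriS]
    have hT1bound : ‖TriS φ (dd n x) 0 (n+1)‖ ≤ (L:ℝ) * ‖φ‖ := by
      have := tri_bound φ (dd n x) (norm_nonneg φ) hφC (dd_modulated hx n) L 1
      rw [Finset.sum_range_one, Nat.zero_mul] at this
      rw [hnt]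
      exact this
    have hT2bound : ‖TriS φ.flip (dd n x) 0 (n+1)‖ ≤ (L:ℝ) * ‖φ‖ := by
      have := tri_bound φ.flip (dd n x) (norm_nonneg φ) hφC' (dd_modulated hx n) L 1
      rw [Finset.sum_range_one, Nat.zero_mul] at this
      rw [hnt]
      exact this
    have hG : ∀ k ∈ range n,
        ‖φ (ee n x (k+1)) (gg n x k) - φ (gg n x k) (ee n x (k+1))‖ ≤ 2*ε := by
      intro k _
      have h1 := h (ee n x (k+1)) (gg n x k) (ee_nonneg n (k+1)) (gg_nonneg n k)
        (ee_mul_gg n k)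
      have h2 := h (gg n x k) (ee n x (k+1)) (gg_nonneg n k) (ee_nonneg n (k+1))
        (gg_mul_ee n k)
      have hne := norm_ee_le (x := x) n (k+1)
      have hge := norm_gg_le (x := x) n k
      have hnn1 : (0:ℝ) ≤ ‖ee n x (k+1)‖ := norm_nonneg _
      have hnn2 : (0:ℝ) ≤ ‖gg n x k‖ := norm_nonneg _
      have e1 : ‖φ (ee n x (k+1)) (gg n x k)‖ ≤ ε := by
        have b1 := mul_le_of_le_one_right (mul_nonneg hε hnn1) hge
        have b2 := mul_le_of_le_one_right hε hne
        linarith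
      have e2 : ‖φ (gg n x k) (ee n x (k+1))‖ ≤ ε := by
        have b1 := mul_le_of_le_one_right (mul_nonneg hε hnn2) hne
        have b2 := mul_le_of_le_one_right hε hge
        linarith
      calc ‖φ (ee n x (k+1)) (gg n x k) - φ (gg n x k) (ee n x (k+1))‖
          ≤ ‖φ (ee n x (k+1)) (gg n x k)‖ + ‖φ (gg n x k) (ee n x (k+1))‖ :=
            norm_sub_le _ _
        _ ≤ 2*ε := by linarith
    have hsum : ∑ k ∈ range n, ψ (ee n x (k+1))
        = (∑ k ∈ range n, (φ (ee n x (k+1)) (gg n x k) - φ (gg n x k) (ee n x (k+1))))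
          + (TriS φ (dd n x) 0 (n+1) - TriS φ.flip (dd n x) 0 (n+1)) := by
      rw [Finset.sum_congr rfl fun k _ => step2 k, Finset.sum_add_distrib]
      congr 1
      rw [Finset.sum_sub_distrib, hT1, hT2]
    have hGsum : ‖∑ k ∈ range n,
        (φ (ee n x (k+1)) (gg n x k) - φ (gg n x k) (ee n x (k+1)))‖ ≤ (n:ℝ) * (2*ε) := by
      refine (norm_sum_le _ _).trans ?_
      calc ∑ k ∈ range n, ‖φ (ee n x (k+1)) (gg n x k) - φ (gg n x k) (ee n x (k+1))‖
          ≤ ∑ _k ∈ range n, 2*ε := Finset.sum_le_sum hG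
        _ = (n:ℝ) * (2*ε) := by rw [Finset.sum_const, Finset.card_range, nsmul_eq_mul]
    rw [step1, norm_smul, Real.norm_eq_abs, abs_of_pos (by positivity : (0:ℝ) < 2/(n:ℝ))]
    calc (2/(n:ℝ)) * ‖∑ k ∈ range n, ψ (ee n x (k+1))‖
        ≤ (2/(n:ℝ)) * ((n:ℝ) * (2*ε) + ((L:ℝ) * ‖φ‖ + (L:ℝ) * ‖φ‖)) := by
          refine mul_le_mul_of_nonneg_left ?_ (by positivity)
          rw [hsum]
          refine (norm_add_le _ _).trans ?_
          refine add_le_add hGsum ?_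
          exact (norm_sub_le _ _).trans (add_le_add hT1bound hT2bound)
      _ = 4*ε + (2/(n:ℝ)) * (2 * L * ‖φ‖) := by
          field_simp
          ring
  -- pass to the limit in L
  have hlim : ‖ψ x‖ ≤ 4*ε := by
    refine le_of_forall_pos_le_add fun η hη => ?_
    obtain ⟨m, hm⟩ := exists_nat_gt (4*‖φ‖/η)
    set L : ℕ := max 5 m with hLdef
    have hL5 : 5 ≤ L := le_max_left _ _
    have hmL : m ≤ L := le_max_right _ _
    obtain ⟨hA, hB⟩ := two_pow_bound L hL5
    have hcast : (L:ℝ)*(L:ℝ) ≤ ((2^L - 1 : ℕ):ℝ) := by exact_mod_cast hB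
    have hNpos : (0:ℝ) < ((2^L - 1:ℕ):ℝ) := by
      have h1 : (1:ℕ) ≤ 2^L - 1 := by
        have : 2^5 ≤ 2^L := Nat.pow_le_pow_right (by norm_num) hL5
        omega
      exact_mod_cast Nat.lt_of_lt_of_le Nat.zero_lt_one h1
    have h4 : 4*‖φ‖ < η * m := by
      rw [div_lt_iff₀ hη] at hm
      linarith
    have h5 : 4*(L:ℝ)*‖φ‖ ≤ η * ((2^L-1:ℕ):ℝ) := by
      have hLm : (m:ℝ) ≤ (L:ℝ) := by exact_mod_cast hmL
      have hL0 : (0:ℝ) ≤ (L:ℝ) := Nat.cast_nonneg _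
      calc 4*(L:ℝ)*‖φ‖ = (4*‖φ‖)*(L:ℝ) := by ring
        _ ≤ (η*m)*(L:ℝ) := mul_le_mul_of_nonneg_right h4.le hL0
        _ ≤ (η*(L:ℝ))*(L:ℝ) := by
            have := mul_le_mul_of_nonneg_left hLm hη.le
            exact mul_le_mul_of_nonneg_right this hL0
        _ = η*((L:ℝ)*(L:ℝ)) := by ring
        _ ≤ η*((2^L-1:ℕ):ℝ) := mul_le_mul_of_nonneg_left hcast hη.le
    refine (main L (by omega)).trans ?_
    have h6 : (2 / ((2^L - 1 : ℕ) : ℝ)) * (2 * L * ‖φ‖) ≤ η := by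
      rw [show (2 / ((2^L - 1 : ℕ) : ℝ)) * (2 * L * ‖φ‖)
          = (4*(L:ℝ)*‖φ‖) / ((2^L - 1:ℕ):ℝ) from by ring]
      rw [div_le_iff₀ hNpos]
      linarith
    linarith
  rwa [hψ x] at hlim

end Main

end Stmt0Aux


/-- Let `A` be a unital C*-algebra, `Z` a normed space,
`φ : A × A → Z` a continuous bilinear map, and `ε ≥ 0` a constant such that
`‖φ(a,b)‖ ≤ ε‖a‖‖b‖` whenever `a, b` are positive elements of `A` with `ab = 0`.
Then `‖φ(a,1) − φ(1,a)‖ ≤ 8ε‖a‖` for every `a ∈ A`. -/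
theorem stmt0 {A Z : Type*} [CStarAlgebra A] [PartialOrder A] [StarOrderedRing A]
    [NormedAddCommGroup Z] [NormedSpace ℂ Z]
    (φ : A →L[ℂ] A →L[ℂ] Z) (ε : ℝ) (hε : 0 ≤ ε)
    (h : ∀ a b : A, 0 ≤ a → 0 ≤ b → a * b = 0 → ‖φ a b‖ ≤ ε * ‖a‖ * ‖b‖) :
    ∀ a : A, ‖φ a 1 - φ 1 a‖ ≤ 8 * ε * ‖a‖ := by
  intro a
  rcases subsingleton_or_nontrivial A with hsub | hnt
  · have ha : a = 0 := Subsingleton.elim a 0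
    subst ha
    simp
  · have hsa : ∀ y : A, IsSelfAdjoint y → ‖φ y 1 - φ 1 y‖ ≤ 4 * ε * ‖y‖ := by
      intro y hy
      rcases eq_or_ne y 0 with rfl | hy0
      · simp
      · have hyn : 0 < ‖y‖ := norm_pos_iff.mpr hy0
        set c : ℂ := ((‖y‖⁻¹ : ℝ) : ℂ) with hc
        have hx : IsSelfAdjoint (c • y) := by
          rw [IsSelfAdjoint, star_smul, hc, Complex.star_def, Complex.conj_ofReal, hy.star_eq]
        have hx1 : ‖c • y‖ ≤ 1 := by
          rw [norm_smul, hc]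
          simp only [Complex.norm_real, Real.norm_eq_abs]
          rw [abs_of_pos (by positivity), inv_mul_cancel₀ (ne_of_gt hyn)]
        have hb := Stmt0Aux.selfadj_bound φ ε hε h hx hx1
        rw [map_smul, ContinuousLinearMap.smul_apply, map_smul, ← smul_sub] at hb
        rw [norm_smul, hc] at hb
        simp only [Complex.norm_real, Real.norm_eq_abs] at hb
        rw [abs_of_pos (by positivity : (0:ℝ) < ‖y‖⁻¹)] at hb
        calc ‖φ y 1 - φ 1 y‖ = ‖y‖ * (‖y‖⁻¹ * ‖φ y 1 - φ 1 y‖) := by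
              field_simp
          _ ≤ ‖y‖ * (4*ε) := mul_le_mul_of_nonneg_left hb hyn.le
          _ = 4*ε*‖y‖ := by ring
    have hre : IsSelfAdjoint ((ℜ a : A)) := (ℜ a).prop
    have him : IsSelfAdjoint ((ℑ a : A)) := (ℑ a).prop
    have hrn : ‖(ℜ a : A)‖ ≤ ‖a‖ := by
      rw [realPart_apply_coe]
      calc ‖(2⁻¹:ℝ) • (a + star a)‖ = 2⁻¹ * ‖a + star a‖ := by
            rw [norm_smul, Real.norm_eq_abs]; norm_num
        _ ≤ 2⁻¹ * (‖a‖ + ‖star a‖) :=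
            mul_le_mul_of_nonneg_left (norm_add_le a (star a)) (by norm_num)
        _ = ‖a‖ := by rw [norm_star]; ring
    have hin : ‖(ℑ a : A)‖ ≤ ‖a‖ := by
      rw [imaginaryPart_apply_coe]
      calc ‖-Complex.I • (2⁻¹:ℝ) • (a - star a)‖
          = ‖-Complex.I‖ * ‖(2⁻¹:ℝ) • (a - star a)‖ := norm_smul _ _
        _ = 2⁻¹ * ‖a - star a‖ := by
            rw [norm_neg, Complex.norm_I, one_mul, norm_smul, Real.norm_eq_abs]; norm_num
        _ ≤ 2⁻¹ * (‖a‖ + ‖star a‖) :=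
            mul_le_mul_of_nonneg_left (norm_sub_le a (star a)) (by norm_num)
        _ = ‖a‖ := by rw [norm_star]; ring
    have hdecomp : φ a 1 - φ 1 a
        = (φ (ℜ a : A) 1 - φ 1 (ℜ a : A))
          + Complex.I • (φ (ℑ a : A) 1 - φ 1 (ℑ a : A)) := by
      conv_lhs => rw [← realPart_add_I_smul_imaginaryPart a]
      simp only [map_add, map_smul, ContinuousLinearMap.add_apply,
        ContinuousLinearMap.smul_apply]
      rw [smul_sub]
      abel
    rw [hdecomp]
    calc ‖(φ (ℜ a : A) 1 - φ 1 (ℜ a : A))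
          + Complex.I • (φ (ℑ a : A) 1 - φ 1 (ℑ a : A))‖
        ≤ ‖φ (ℜ a : A) 1 - φ 1 (ℜ a : A)‖
          + ‖Complex.I • (φ (ℑ a : A) 1 - φ 1 (ℑ a : A))‖ := norm_add_le _ _
      _ = ‖φ (ℜ a : A) 1 - φ 1 (ℜ a : A)‖ + ‖φ (ℑ a : A) 1 - φ 1 (ℑ a : A)‖ := by
          rw [norm_smul, Complex.norm_I, one_mul]
      _ ≤ 4*ε*‖(ℜ a : A)‖ + 4*ε*‖(ℑ a : A)‖ := add_le_add (hsa _ hre) (hsa _ him)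
      _ ≤ 4*ε*‖a‖ + 4*ε*‖a‖ := by
          have h1 := mul_le_mul_of_nonneg_left hrn (by positivity : (0:ℝ) ≤ 4*ε)
          have h2 := mul_le_mul_of_nonneg_left hin (by positivity : (0:ℝ) ≤ 4*ε)
          linarith
      _ = 8*ε*‖a‖ := by ring
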